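/- Let ℓ: ℝ → ℝ be a polynomial of degree at most 2 (so that its second-order Taylor expansion is exact). Let R be a random vector in ℝ^d with mean 𝟙_d and covariance λΣ. Then for any w, x ∈ ℝ^d: E[ℓ(wᵀ(R ⊙ x))] = ℓ(wᵀx) + (λ/2) ℓ''(wᵀx) · wᵀ((xxᵀ) ⊙ Σ)w. -/

import Mathlib

open MeasureTheory Finset

/-- For a quadratic loss `ℓ(t) = a t² + b t + c` (degree ≤ 2, so that its
second-order Taylor expansion is exact, with constant second derivative `2a`) and noise
`R` with mean `𝟙` and covariance `λΣ`:
`E[ℓ(wᵀ(R ⊙ x))] = ℓ(wᵀx) + (λ/2) ℓ''(wᵀx) wᵀ((xxᵀ) ⊙ Σ)w`. -/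
theorem stmt14 {Ω : Type*} [MeasurableSpace Ω] (μ : Measure Ω) [IsProbabilityMeasure μ]
    (d : ℕ) (R : Ω → Fin d → ℝ) (l : ℝ) (S : Matrix (Fin d) (Fin d) ℝ)
    (hl : 0 ≤ l) (hS : S.PosSemidef)
    (hmean : ∀ j, ∫ ω, R ω j ∂μ = 1)
    (hcov : ∀ j k, ∫ ω, (R ω j - 1) * (R ω k - 1) ∂μ = l * S j k)
    (hint : ∀ j k, Integrable (fun ω => R ω j * R ω k) μ)
    (a b c : ℝ) (ℓ : ℝ → ℝ) (hℓ : ∀ t, ℓ t = a * t ^ 2 + b * t + c)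
    (w x : Fin d → ℝ) :
    ∫ ω, ℓ (∑ j, w j * (R ω j * x j)) ∂μ
      = ℓ (∑ j, w j * x j)
        + (l / 2) * (2 * a) * ∑ i, ∑ j, w i * (x i * x j * S i j) * w j := by
  -- integrability of each coordinate of R
  have hRint : ∀ j, Integrable (fun ω => R ω j) μ := by
    intro j
    by_contra h
    have := hmean j
    rw [integral_undef h] at this
    norm_num at this
  -- second moments
  have key : ∀ i j, ∫ ω, R ω i * R ω j ∂μ = 1 + l * S i j := by
    intro i j
    have h1 := hcov i j
    have hcong : (fun ω => (R ω i - 1) * (R ω j - 1))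
        = fun ω => R ω i * R ω j - R ω i - R ω j + 1 := by
      funext ω; ring
    rw [hcong] at h1
    have ha : Integrable (fun ω => R ω i * R ω j - R ω i - R ω j) μ :=
      ((hint i j).sub (hRint i)).sub (hRint j)
    have hb : Integrable (fun ω => R ω i * R ω j - R ω i) μ := (hint i j).sub (hRint i)
    rw [integral_add ha (integrable_const 1),
        integral_sub hb (hRint j),
        integral_sub (hint i j) (hRint i), hmean i, hmean j,
        integral_const] at h1
    simp at h1
    linarith
  set u : Fin d → ℝ := fun j => w j * x j with hu
  have hsum : ∀ ω, ℓ (∑ j, w j * (R ω j * x j))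
      = a * (∑ i, ∑ j, u i * u j * (R ω i * R ω j)) + b * (∑ j, u j * R ω j) + c := by
    intro ω
    have h2 : (∑ j, w j * (R ω j * x j)) = ∑ j, u j * R ω j := by
      apply Finset.sum_congr rfl; intro j _; simp [hu]; ring
    rw [hℓ, h2]
    have h3 : (∑ j, u j * R ω j) ^ 2 = ∑ i, ∑ j, u i * u j * (R ω i * R ω j) := by
      rw [sq, Finset.sum_mul_sum]
      apply Finset.sum_congr rfl; intro i _
      apply Finset.sum_congr rfl; intro j _; ring
    rw [h3]
  have hI1 : Integrable (fun ω => ∑ i, ∑ j, u i * u j * (R ω i * R ω j)) μ :=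
    integrable_finset_sum _ fun i _ =>
      integrable_finset_sum _ fun j _ => (hint i j).const_mul _
  have hI2 : Integrable (fun ω => ∑ j, u j * R ω j) μ :=
    integrable_finset_sum _ fun j _ => (hRint j).const_mul _
  calc ∫ ω, ℓ (∑ j, w j * (R ω j * x j)) ∂μ
      = ∫ ω, (a * (∑ i, ∑ j, u i * u j * (R ω i * R ω j)) + b * (∑ j, u j * R ω j) + c) ∂μ := by
        exact integral_congr_ae (Filter.Eventually.of_forall hsum)
    _ = a * (∑ i, ∑ j, u i * u j * (1 + l * S i j)) + b * (∑ j, u j) + c := by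
        have ha : Integrable (fun ω => a * (∑ i, ∑ j, u i * u j * (R ω i * R ω j))
            + b * (∑ j, u j * R ω j)) μ := (hI1.const_mul a).add (hI2.const_mul b)
        rw [integral_add ha (integrable_const c),
            integral_add (hI1.const_mul a) (hI2.const_mul b),
            integral_const_mul, integral_const_mul, integral_const]
        simp only [measure_univ, probReal_univ, ENNReal.toReal_one, smul_eq_mul, one_mul]
        congr 2
        · rw [integral_finset_sum _ fun i _ =>
            integrable_finset_sum _ fun j _ => (hint i j).const_mul _]
          congr 1
          apply Finset.sum_congr rfl; intro i _
          rw [integral_finset_sum _ fun j _ => (hint i j).const_mul _]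
          apply Finset.sum_congr rfl; intro j _
          rw [integral_const_mul, key]
        · rw [integral_finset_sum _ fun j _ => (hRint j).const_mul _]
          congr 1
          apply Finset.sum_congr rfl; intro j _
          rw [integral_const_mul, hmean, mul_one]
    _ = ℓ (∑ j, w j * x j)
        + (l / 2) * (2 * a) * ∑ i, ∑ j, w i * (x i * x j * S i j) * w j := by
        rw [hℓ]
        have e1 : ∑ i, ∑ j, u i * u j * (1 + l * S i j)
            = (∑ j, u j) ^ 2 + l * ∑ i, ∑ j, w i * (x i * x j * S i j) * w j := by
          rw [sq, Finset.sum_mul_sum, Finset.mul_sum, ← Finset.sum_add_distrib]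
          apply Finset.sum_congr rfl; intro i _
          rw [Finset.mul_sum, ← Finset.sum_add_distrib]
          apply Finset.sum_congr rfl; intro j _
          simp [hu]; ring
        rw [e1]; ring
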